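/- Let y, z, Y, Z : ℤ → ℝ be sequences of positive reals satisfying the coupled q-Painlevé VI recurrences: for all n ∈ ℤ, y_{n+2} Z_n (1/z_{n+1}+1)(1/Y_{n+1}+1) = (y_{n+1}+1)(Z_{n+1}+1), z_{n+2} Y_n (1/y_{n+1}+1)(1/Z_{n+1}+1) = (z_{n+1}+1)(Y_{n+1}+1), Y_{n+2} z_n (1/Z_{n+1}+1)(1/y_{n+1}+1) = (Y_{n+1}+1)(z_{n+1}+1), and Z_{n+2} y_n (1/Y_{n+1}+1)(1/z_{n+1}+1) = (Z_{n+1}+1)(y_{n+1}+1). Define P_n := y_n z_n Y_n Z_n. Then P_{n+2} P_n = P_{n+1}^2 for all n ∈ ℤ. -/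

import Mathlib

/-- For positive solutions of the coupled q-Painlevé VI recurrences, the
product `P n := y n * z n * Y n * Z n` satisfies `P (n+2) * P n = (P (n+1))^2`. -/
theorem qPVI_product_geometric
    (y z Y Z : ℤ → ℝ)
    (hy : ∀ n : ℤ, 0 < y n) (hz : ∀ n : ℤ, 0 < z n)
    (hY : ∀ n : ℤ, 0 < Y n) (hZ : ∀ n : ℤ, 0 < Z n)
    (hrec₁ : ∀ n : ℤ,
      y (n + 2) * Z n * (1 / z (n + 1) + 1) * (1 / Y (n + 1) + 1) =
        (y (n + 1) + 1) * (Z (n + 1) + 1))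
    (hrec₂ : ∀ n : ℤ,
      z (n + 2) * Y n * (1 / y (n + 1) + 1) * (1 / Z (n + 1) + 1) =
        (z (n + 1) + 1) * (Y (n + 1) + 1))
    (hrec₃ : ∀ n : ℤ,
      Y (n + 2) * z n * (1 / Z (n + 1) + 1) * (1 / y (n + 1) + 1) =
        (Y (n + 1) + 1) * (z (n + 1) + 1))
    (hrec₄ : ∀ n : ℤ,
      Z (n + 2) * y n * (1 / Y (n + 1) + 1) * (1 / z (n + 1) + 1) =
        (Z (n + 1) + 1) * (y (n + 1) + 1))
    (P : ℤ → ℝ) (hP : ∀ n : ℤ, P n = y n * z n * Y n * Z n) :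
    ∀ n : ℤ, P (n + 2) * P n = (P (n + 1)) ^ 2 := by
  intro n
  have h1 := hrec₁ n
  have h2 := hrec₂ n
  have h3 := hrec₃ n
  have h4 := hrec₄ n
  have hy1 := (hy (n + 1)).ne'
  have hz1 := (hz (n + 1)).ne'
  have hY1 := (hY (n + 1)).ne'
  have hZ1 := (hZ (n + 1)).ne'
  have hp1 : (y (n+1) + 1) ≠ 0 := by nlinarith [hy (n+1)]
  have hp2 : (z (n+1) + 1) ≠ 0 := by nlinarith [hz (n+1)]
  have hp3 : (Y (n+1) + 1) ≠ 0 := by nlinarith [hY (n+1)]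
  have hp4 : (Z (n+1) + 1) ≠ 0 := by nlinarith [hZ (n+1)]
  field_simp at h1 h2 h3 h4
  have hm : (y (n + 2) * Z n * (1 + z (n + 1)) * (1 + Y (n + 1))) *
      (z (n + 2) * Y n * (1 + y (n + 1)) * (1 + Z (n + 1))) *
      (Y (n + 2) * z n * (1 + Z (n + 1)) * (1 + y (n + 1))) *
      (Z (n + 2) * y n * (1 + Y (n + 1)) * (1 + z (n + 1))) =
      ((y (n + 1) + 1) * (Z (n + 1) + 1) * (z (n + 1) * Y (n + 1))) *
      ((z (n + 1) + 1) * (Y (n + 1) + 1) * (y (n + 1) * Z (n + 1))) *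
      ((Y (n + 1) + 1) * (z (n + 1) + 1) * (Z (n + 1) * y (n + 1))) *
      ((Z (n + 1) + 1) * (y (n + 1) + 1) * (Y (n + 1) * z (n + 1))) := by
    have h3' : Y (n + 2) * z n * (1 + Z (n + 1)) * (1 + y (n + 1)) = y (n + 1) * Z (n + 1) * (z (n + 1) + 1) * (Y (n + 1) + 1) := by linear_combination h3
    have h4' : Z (n + 2) * y n * (1 + Y (n + 1)) * (1 + z (n + 1)) = z (n + 1) * Y (n + 1) * (y (n + 1) + 1) * (Z (n + 1) + 1) := by linear_combination h4
    rw [h1, h2, h3', h4']; ring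
  rw [hP, hP, hP]
  have hcpos : (0:ℝ) < ((1 + y (n+1)) * (1 + z (n+1)) * (1 + Y (n+1)) * (1 + Z (n+1)))^2 := by
    have := hy (n+1); have := hz (n+1); have := hY (n+1); have := hZ (n+1)
    positivity
  apply mul_left_cancel₀ hcpos.ne'
  linear_combination hm
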